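/- arXiv:2410.23826 — 3 statements merged into one kernel-verified Lean document; each statement's English description precedes it below -/
import Mathlib

section
/- Let G = (V,E,w) be a connected weighted graph, let Δ > 0 be a real number, and let N ⊆ V be a set of at least 2 vertices such that d_G(u,v) > Δ for all distinct u, v ∈ N. Then |N|·Δ ≤ 2·w(MST(G)). -/
open scoped ENNReal

/-- The cost (total weight) of a walk in a graph, with edge weights `w`. -/
noncomputable def walkCost {V : Type*} {G : SimpleGraph V} (w : Sym2 V → ℝ) {u v : V}
    (p : G.Walk u v) : ℝ≥0∞ :=
  (p.edges.map (fun e => ENNReal.ofReal (w e))).sum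

/-- Shortest-path distance in a weighted graph (`⊤` if no walk exists). -/
noncomputable def wdist {V : Type*} (G : SimpleGraph V) (w : Sym2 V → ℝ) (u v : V) : ℝ≥0∞ :=
  ⨅ p : G.Walk u v, walkCost w p

/-- Total weight of (the edges of) a graph. -/
noncomputable def gweight {V : Type*} (w : Sym2 V → ℝ) (H : SimpleGraph V) : ℝ :=
  ∑ᶠ e ∈ H.edgeSet, w e

/-- `T` is a spanning tree of `G`. -/
def IsSpanningTree {V : Type*} (G T : SimpleGraph V) : Prop :=
  T ≤ G ∧ T.IsTree

/-- Weight of a minimum spanning tree of `G`. -/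
noncomputable def mstWeight {V : Type*} (w : Sym2 V → ℝ) (G : SimpleGraph V) : ℝ :=
  sInf {x : ℝ | ∃ T : SimpleGraph V, IsSpanningTree G T ∧ x = gweight w T}

/-- Maximum edge weight on a walk. -/
noncomputable def maxEdgeCost {V : Type*} {G : SimpleGraph V} (w : Sym2 V → ℝ) {u v : V}
    (p : G.Walk u v) : ℝ≥0∞ :=
  (p.edges.map (fun e => ENNReal.ofReal (w e))).foldr max 0

/-- `W(x,y)`: the minimum over all shortest `x`–`y` walks of the maximum edge weight on it. -/
noncomputable def Wlocal {V : Type*} (G : SimpleGraph V) (w : Sym2 V → ℝ) (x y : V) : ℝ≥0∞ :=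
  ⨅ p : {p : G.Walk x y // walkCost w p = wdist G w x y}, maxEdgeCost w p.1

namespace SepMST

variable {V : Type*} {G H : SimpleGraph V} (w : Sym2 V → ℝ)

lemma walkCost_nil {u : V} : walkCost w (SimpleGraph.Walk.nil : G.Walk u u) = 0 := by
  simp [walkCost]

lemma walkCost_cons {u x v : V} (h : G.Adj u x) (p : G.Walk x v) :
    walkCost w (SimpleGraph.Walk.cons h p) = ENNReal.ofReal (w s(u, x)) + walkCost w p := by
  simp [walkCost]

lemma walkCost_append {u x v : V} (p : G.Walk u x) (q : G.Walk x v) :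
    walkCost w (p.append q) = walkCost w p + walkCost w q := by
  simp [walkCost]

lemma walkCost_reverse {u v : V} (p : G.Walk u v) :
    walkCost w p.reverse = walkCost w p := by
  simp [walkCost, List.sum_reverse]

lemma walkCost_ne_top {u v : V} (p : G.Walk u v) : walkCost w p ≠ ⊤ := by
  induction p with
  | nil => simp [walkCost]
  | cons h p ih =>
    rw [walkCost_cons]
    exact ENNReal.add_ne_top.2 ⟨ENNReal.ofReal_ne_top, ih⟩

lemma wdist_le_walkCost {u v : V} (p : G.Walk u v) : wdist G w u v ≤ walkCost w p :=
  iInf_le _ p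

lemma wdist_self (u : V) : wdist G w u u = 0 :=
  le_antisymm (by simpa [walkCost] using wdist_le_walkCost w (SimpleGraph.Walk.nil : G.Walk u u))
    (zero_le)

lemma wdist_symm (u v : V) : wdist G w u v = wdist G w v u := by
  have : ∀ a b : V, wdist G w a b ≤ wdist G w b a := by
    intro a b
    refine le_iInf fun p => ?_
    simpa [walkCost_reverse] using wdist_le_walkCost w p.reverse
  exact le_antisymm (this u v) (this v u)

lemma wdist_triangle (u x v : V) : wdist G w u v ≤ wdist G w u x + wdist G w x v := by
  rcases isEmpty_or_nonempty (G.Walk u x) with he | hne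
  · have h1 : wdist G w u x = ⊤ := by rw [wdist]; exact iInf_of_empty _
    simp [h1]
  rcases isEmpty_or_nonempty (G.Walk x v) with he2 | hne2
  · have h1 : wdist G w x v = ⊤ := by rw [wdist]; exact iInf_of_empty _
    rw [h1, add_top]
    exact le_top
  rw [wdist, wdist, wdist, ENNReal.iInf_add]
  simp_rw [ENNReal.add_iInf]
  refine le_iInf fun p => le_iInf fun q => ?_
  rw [← walkCost_append]
  exact wdist_le_walkCost w (p.append q)

lemma wdist_anti (hle : H ≤ G) (u v : V) : wdist G w u v ≤ wdist H w u v := by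
  refine le_iInf fun p => ?_
  have := wdist_le_walkCost w (p.mapLe hle)
  rwa [show walkCost w (p.mapLe hle) = walkCost w p from ?_] at this
  have hedge : ∀ e : Sym2 V, Sym2.map (⇑(SimpleGraph.Hom.ofLE hle)) e = e := by
    intro e; induction e using Sym2.ind with | _ a b => rfl
  simp [walkCost, SimpleGraph.Walk.mapLe, SimpleGraph.Walk.edges_map, hedge, Function.comp_def]

lemma wdist_adj {a b : V} (h : G.Adj a b) : wdist G w a b ≤ ENNReal.ofReal (w s(a, b)) := by
  simpa [walkCost_cons, walkCost_nil] using
    wdist_le_walkCost w (SimpleGraph.Walk.cons h SimpleGraph.Walk.nil)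

lemma wdist_triangle_adj (u a b : V) (h : G.Adj a b) :
    wdist G w u b ≤ wdist G w u a + ENNReal.ofReal (w s(a, b)) :=
  (wdist_triangle w u a b).trans (add_le_add_right (wdist_adj w h) _)


/-- min of the distances from `u` to the two endpoints of `e`. -/
noncomputable def dmin (H : SimpleGraph V) (w : Sym2 V → ℝ) (u : V) (e : Sym2 V) : ℝ≥0∞ :=
  Sym2.lift ⟨fun a b => min (wdist H w u a) (wdist H w u b), fun a b => min_comm _ _⟩ e

@[simp] lemma dmin_mk (H : SimpleGraph V) (u a b : V) :
    dmin H w u s(a, b) = min (wdist H w u a) (wdist H w u b) := rfl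

/-- coverage of edge `e` by the ball of radius `δ` around `u`. -/
noncomputable def fball (H : SimpleGraph V) (w : Sym2 V → ℝ) (δ : ℝ≥0∞) (u : V) (e : Sym2 V) :
    ℝ≥0∞ :=
  min (ENNReal.ofReal (w e)) (δ - dmin H w u e)

lemma wdist_ne_top (hH : H.Connected) (u v : V) : wdist H w u v ≠ ⊤ := by
  obtain ⟨q⟩ := hH.preconnected u v
  exact ne_top_of_le_ne_top (walkCost_ne_top w q) (wdist_le_walkCost w q)

lemma arith {δ D D' w' c S : ℝ≥0∞} (hD' : D' ≤ D + w') (hfin : D' ≠ ⊤)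
    (IH : min δ (D' + c) ≤ D' + S) :
    min δ (D + w' + c) ≤ D + (min w' (δ - D) + S) := by
  by_cases hD : D = ⊤
  · simp [hD]
  rcases le_total δ D with h | h
  · exact le_trans (min_le_left _ _) (h.trans le_self_add)
  · rcases le_total δ (D + w') with h2 | h2
    · refine le_trans (min_le_left _ _) ?_
      calc δ = min (D + w') δ := (min_eq_right h2).symm
        _ = min (D + w') (D + (δ - D)) := by rw [add_tsub_cancel_of_le h]
        _ = D + min w' (δ - D) := min_add_add_left D w' (δ - D)
        _ ≤ D + (min w' (δ - D) + S) := add_le_add_right le_self_add _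
    · have hw' : min w' (δ - D) = w' := min_eq_left (ENNReal.le_sub_of_add_le_left hD h2)
      rcases le_total δ (D' + c) with h3 | h3
      · rw [min_eq_left h3] at IH
        refine le_trans (min_le_left _ _) ?_
        calc δ ≤ D' + S := IH
          _ ≤ D + w' + S := add_le_add_left hD' _
          _ = D + (min w' (δ - D) + S) := by rw [hw', add_assoc]
      · rw [min_eq_right h3] at IH
        have hc : c ≤ S := (ENNReal.add_le_add_iff_left hfin).1 IH
        refine le_trans (min_le_right _ _) ?_
        rw [hw', ← add_assoc]
        exact add_le_add_right hc _

lemma le_sum_fball (hH : H.Connected) (δ : ℝ≥0∞) (u : V) {b v : V} (Q : H.Walk b v) :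
    min δ (wdist H w u b + walkCost w Q) ≤
      wdist H w u b + (Q.edges.map (fball H w δ u)).sum := by
  induction Q with
  | nil =>
    simpa [walkCost_nil] using min_le_right δ (wdist H w u b)
  | @cons b c v' h Q ih =>
    rw [walkCost_cons]
    simp only [SimpleGraph.Walk.edges_cons, List.map_cons, List.sum_cons]
    have hD' := wdist_triangle_adj w u b c h
    have hfin := wdist_ne_top w hH u c
    have hf : min (ENNReal.ofReal (w s(b, c))) (δ - wdist H w u b) ≤ fball H w δ u s(b, c) := by
      refine min_le_min le_rfl (tsub_le_tsub_left ?_ δ)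
      simp
    calc min δ (wdist H w u b + (ENNReal.ofReal (w s(b, c)) + walkCost w Q))
        = min δ (wdist H w u b + ENNReal.ofReal (w s(b, c)) + walkCost w Q) := by
          rw [add_assoc]
      _ ≤ wdist H w u b + (min (ENNReal.ofReal (w s(b, c))) (δ - wdist H w u b)
            + (Q.edges.map (fball H w δ u)).sum) := arith hD' hfin ih
      _ ≤ _ := add_le_add_right (add_le_add_left hf _) _

lemma delta_le_sum_fball [DecidableEq V] [DecidableEq (Sym2 V)] (hH : H.Connected) (δ : ℝ≥0∞) {u v : V}
    (hd : δ ≤ wdist H w u v) (ET : Finset (Sym2 V)) (hsub : H.edgeSet ⊆ ↑ET) :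
    δ ≤ ∑ e ∈ ET, fball H w δ u e := by
  obtain ⟨q⟩ := hH.preconnected u v
  have hkey := le_sum_fball w hH δ u q.toPath.1
  rw [wdist_self, zero_add, zero_add] at hkey
  have hcost : δ ≤ walkCost w q.toPath.1 := hd.trans (wdist_le_walkCost w _)
  rw [min_eq_left hcost] at hkey
  refine hkey.trans ?_
  rw [← List.sum_toFinset _ (q.toPath.2.isTrail.edges_nodup)]
  refine Finset.sum_le_sum_of_subset ?_
  intro e he
  rw [List.mem_toFinset] at he
  exact Finset.mem_coe.1 (hsub (q.toPath.1.edges_subset_edgeSet he))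



lemma sum_fball_le (hδ : δ ≠ ⊤) (Nfin : Finset V)
    (hsep : ∀ u ∈ Nfin, ∀ v ∈ Nfin, u ≠ v → δ + δ ≤ wdist H w u v)
    {a b : V} (hab : H.Adj a b) :
    ∑ u ∈ Nfin, fball H w δ u s(a, b) ≤ ENNReal.ofReal (w s(a, b)) := by
  classical
  set w' := ENNReal.ofReal (w s(a, b)) with hw'
  set da : V → ℝ≥0∞ := fun u => wdist H w u a with hda
  set db : V → ℝ≥0∞ := fun u => wdist H w u b with hdb
  set F : V → ℝ≥0∞ := fun u => fball H w δ u s(a, b) with hF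
  have hfb : ∀ u, F u = min w' (δ - min (da u) (db u)) := fun u => rfl
  have key : ∀ x : V, ∀ u ∈ Nfin, ∀ u' ∈ Nfin, u ≠ u' →
      wdist H w u x < δ → wdist H w u' x < δ → False := by
    intro x u hu u' hu' hne h1 h2
    have ht : wdist H w u u' ≤ wdist H w u x + wdist H w u' x := by
      calc wdist H w u u' ≤ wdist H w u x + wdist H w x u' := wdist_triangle w u x u'
        _ = wdist H w u x + wdist H w u' x := by rw [wdist_symm w x u']
    exact absurd ((hsep u hu u' hu' hne).trans ht) (not_le.2 (ENNReal.add_lt_add h1 h2))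
  have hpos : ∀ u, F u ≠ 0 → min (da u) (db u) < δ := by
    intro u h
    by_contra hge
    push_neg at hge
    rw [hfb u, tsub_eq_zero_of_le hge, min_eq_right zero_le] at h
    exact h rfl
  have hFle : ∀ u, F u ≤ w' := fun u => min_le_left _ _
  rw [← Finset.sum_filter_of_ne (p := fun u => F u ≠ 0) (fun u _ h => h)]
  set S := Nfin.filter (fun u => F u ≠ 0) with hS
  have hSN : ∀ u, u ∈ S → u ∈ Nfin := fun u hu => (Finset.mem_filter.1 hu).1
  have hposS : ∀ u ∈ S, min (da u) (db u) < δ :=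
    fun u hu => hpos u (Finset.mem_filter.1 hu).2
  have pairbound : ∀ x₀ ∈ S, ∀ x₁ ∈ S, x₀ ≠ x₁ → da x₀ ≤ db x₀ → db x₁ ≤ da x₁ →
      ∑ u ∈ S, F u ≤ w' := by
    intro x₀ hx₀ x₁ hx₁ hne hA hB
    have h1 : da x₀ < δ := by
      have := hposS x₀ hx₀; rwa [min_eq_left hA] at this
    have h2 : db x₁ < δ := by
      have := hposS x₁ hx₁; rwa [min_eq_right hB] at this
    have hsub : S ⊆ {x₀, x₁} := by
      intro s hs
      rcases le_total (da s) (db s) with hPa | hPb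
      · have hls : da s < δ := by have := hposS s hs; rwa [min_eq_left hPa] at this
        by_cases hsx : s = x₀
        · simp [hsx]
        · exact absurd (key a s (hSN s hs) x₀ (hSN x₀ hx₀) hsx hls h1) id
      · have hls : db s < δ := by have := hposS s hs; rwa [min_eq_right hPb] at this
        by_cases hsx : s = x₁
        · simp [hsx]
        · exact absurd (key b s (hSN s hs) x₁ (hSN x₁ hx₁) hsx hls h2) id
    have hpairsum : ∑ u ∈ S, F u ≤ F x₀ + F x₁ := by
      calc ∑ u ∈ S, F u ≤ ∑ u ∈ {x₀, x₁}, F u := Finset.sum_le_sum_of_subset hsub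
        _ = F x₀ + F x₁ := Finset.sum_pair hne
    refine hpairsum.trans ?_
    have hb1 : F x₀ ≤ δ - da x₀ := by rw [hfb x₀, min_eq_left hA]; exact min_le_right _ _
    have hb2 : F x₁ ≤ δ - db x₁ := by rw [hfb x₁, min_eq_right hB]; exact min_le_right _ _
    refine (add_le_add hb1 hb2).trans ?_
    have e1 : δ - da x₀ + da x₀ = δ := tsub_add_cancel_of_le h1.le
    have e2 : δ - db x₁ + db x₁ = δ := tsub_add_cancel_of_le h2.le
    have hsum2 : (δ - da x₀) + (δ - db x₁) + (da x₀ + db x₁) = δ + δ := by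
      rw [add_add_add_comm, e1, e2]
    have htr : δ + δ ≤ w' + (da x₀ + db x₁) := by
      refine (hsep x₀ (hSN x₀ hx₀) x₁ (hSN x₁ hx₁) hne).trans ?_
      calc wdist H w x₀ x₁ ≤ wdist H w x₀ a + wdist H w a x₁ := wdist_triangle w x₀ a x₁
        _ ≤ wdist H w x₀ a + (wdist H w a b + wdist H w b x₁) :=
            add_le_add_right (wdist_triangle w a b x₁) _
        _ ≤ da x₀ + (w' + db x₁) := by
            refine add_le_add_right (add_le_add (wdist_adj w hab) (le_of_eq ?_)) _
            rw [wdist_symm w b x₁]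
        _ = w' + (da x₀ + db x₁) := by ring
    have hfin : da x₀ + db x₁ ≠ ⊤ := by
      refine ENNReal.add_ne_top.2 ⟨?_, ?_⟩
      · exact (h1.trans (lt_top_iff_ne_top.2 hδ)).ne
      · exact (h2.trans (lt_top_iff_ne_top.2 hδ)).ne
    exact (ENNReal.add_le_add_iff_right hfin).1 (by rw [hsum2]; exact htr)
  rcases Finset.eq_empty_or_nonempty S with hSe | ⟨u₀, hu₀⟩
  · rw [hSe]; simp
  by_cases hone : ∀ u ∈ S, u = u₀
  · have hsub : S ⊆ {u₀} := fun s hs => Finset.mem_singleton.2 (hone s hs)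
    calc ∑ u ∈ S, F u ≤ ∑ u ∈ {u₀}, F u := Finset.sum_le_sum_of_subset hsub
      _ = F u₀ := Finset.sum_singleton _ _
      _ ≤ w' := hFle u₀
  · push_neg at hone
    obtain ⟨u₁, hu₁, hne10⟩ := hone
    rcases le_total (da u₀) (db u₀) with hA0 | hB0 <;>
      rcases le_total (da u₁) (db u₁) with hA1 | hB1
    · have l0 : da u₀ < δ := by have := hposS u₀ hu₀; rwa [min_eq_left hA0] at this
      have l1 : da u₁ < δ := by have := hposS u₁ hu₁; rwa [min_eq_left hA1] at this
      exact absurd (key a u₀ (hSN u₀ hu₀) u₁ (hSN u₁ hu₁) (Ne.symm hne10) l0 l1) id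
    · exact pairbound u₀ hu₀ u₁ hu₁ (Ne.symm hne10) hA0 hB1
    · exact pairbound u₁ hu₁ u₀ hu₀ hne10 hA1 hB0
    · have l0 : db u₀ < δ := by have := hposS u₀ hu₀; rwa [min_eq_right hB0] at this
      have l1 : db u₁ < δ := by have := hposS u₁ hu₁; rwa [min_eq_right hB1] at this
      exact absurd (key b u₀ (hSN u₀ hu₀) u₁ (hSN u₁ hu₁) (Ne.symm hne10) l0 l1) id

lemma reach_del {G : SimpleGraph V} {x y : V}
    (h : (G \ SimpleGraph.fromEdgeSet {s(x, y)}).Reachable x y) :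
    ∀ a b : V, G.Reachable a b → (G \ SimpleGraph.fromEdgeSet {s(x, y)}).Reachable a b := by
  rintro a b ⟨p⟩
  induction p with
  | nil => exact SimpleGraph.Reachable.refl _
  | @cons a c b' hadj q ih =>
    refine SimpleGraph.Reachable.trans ?_ ih
    by_cases he : s(a, c) = s(x, y)
    · rw [Sym2.eq_iff] at he
      rcases he with ⟨rfl, rfl⟩ | ⟨rfl, rfl⟩
      · exact h
      · exact h.symm
    · refine SimpleGraph.Adj.reachable ?_
      rw [SimpleGraph.sdiff_adj]
      exact ⟨hadj, fun hf => he (Set.mem_singleton_iff.1 ((SimpleGraph.fromEdgeSet_adj _).1 hf).1)⟩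

lemma exists_spanning_tree {V : Type} [Fintype V] (G : SimpleGraph V) (hG : G.Connected) :
    ∃ T, T ≤ G ∧ T.IsTree := by
  classical
  suffices h : ∀ (n : ℕ) (G : SimpleGraph V), G.edgeSet.ncard ≤ n → G.Connected →
      ∃ T, T ≤ G ∧ T.IsTree from h _ G le_rfl hG
  intro n
  induction n using Nat.strong_induction_on with
  | _ n ih =>
    intro G hcard hconn
    by_cases hac : G.IsAcyclic
    · exact ⟨G, le_rfl, ⟨hconn, hac⟩⟩
    · rw [SimpleGraph.isAcyclic_iff_forall_adj_isBridge] at hac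
      push_neg at hac
      obtain ⟨x, y, hadj, hnb⟩ := hac
      have hreach : (G \ SimpleGraph.fromEdgeSet {s(x, y)}).Reachable x y := by
        rw [SimpleGraph.isBridge_iff] at hnb
        push_neg at hnb
        exact hnb
      set G' := G \ SimpleGraph.fromEdgeSet {s(x, y)} with hG'
      have hle' : G' ≤ G := sdiff_le
      have hconn' : G'.Connected := by
        rw [SimpleGraph.connected_iff] at hconn ⊢
        exact ⟨fun a b => reach_del hreach a b (hconn.1 a b), hconn.2⟩
      have hmem : s(x, y) ∈ G.edgeSet := hadj
      have hnmem : s(x, y) ∉ G'.edgeSet := by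
        intro hmem'
        have : G'.Adj x y := hmem'
        rw [hG', SimpleGraph.sdiff_adj] at this
        exact this.2 ((SimpleGraph.fromEdgeSet_adj _).2 ⟨rfl, hadj.ne⟩)
      have hss : G'.edgeSet ⊂ G.edgeSet := by
        rw [Set.ssubset_iff_of_subset (SimpleGraph.edgeSet_mono hle')]
        exact ⟨s(x, y), hmem, hnmem⟩
      have hcard' : G'.edgeSet.ncard < G.edgeSet.ncard :=
        Set.ncard_lt_ncard hss (Set.toFinite _)
      obtain ⟨T, hT1, hT2⟩ := ih G'.edgeSet.ncard (lt_of_lt_of_le hcard' hcard) G' le_rfl hconn'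
      exact ⟨T, hT1.trans hle', hT2⟩

lemma tree_bound {V : Type} [Fintype V] {G T : SimpleGraph V} (w : Sym2 V → ℝ)
    (hw : ∀ e ∈ G.edgeSet, 0 < w e) (hle : T ≤ G) (hT : T.IsTree)
    {Δ : ℝ} (hΔ : 0 < Δ) {N : Set V} (hN2 : 2 ≤ N.ncard)
    (hsep : ∀ u ∈ N, ∀ v ∈ N, u ≠ v → ENNReal.ofReal Δ < wdist G w u v) :
    (N.ncard : ℝ) * Δ ≤ 2 * gweight w T := by
  classical
  set δ := ENNReal.ofReal (Δ / 2) with hδdef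
  have hδne : δ ≠ ⊤ := ENNReal.ofReal_ne_top
  have hδδ : δ + δ = ENNReal.ofReal Δ := by
    rw [hδdef, ← ENNReal.ofReal_add (by linarith) (by linarith)]
    norm_num
  set ET := (Set.toFinite T.edgeSet).toFinset with hET
  set Nfin := (Set.toFinite N).toFinset with hNfin
  have hNcard : N.ncard = Nfin.card := Set.ncard_eq_toFinset_card _ _
  have hmemN : ∀ u, u ∈ Nfin ↔ u ∈ N := fun u => Set.Finite.mem_toFinset _
  have hsepT : ∀ u ∈ Nfin, ∀ v ∈ Nfin, u ≠ v → δ + δ ≤ wdist T w u v := by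
    intro u hu v hv hne
    rw [hδδ]
    exact le_of_lt ((hsep u ((hmemN u).1 hu) v ((hmemN v).1 hv) hne).trans_le
      (wdist_anti w hle u v))
  have hgToT : ∀ e ∈ ET, e ∈ G.edgeSet := by
    intro e he
    exact SimpleGraph.edgeSet_mono hle ((Set.Finite.mem_toFinset _).1 he)
  have hlow : ∀ u ∈ Nfin, δ ≤ ∑ e ∈ ET, fball T w δ u e := by
    intro u hu
    obtain ⟨v, hv, hvu⟩ := Set.exists_ne_of_one_lt_ncard (by omega : 1 < N.ncard) u
    refine delta_le_sum_fball w hT.isConnected δ (v := v) ?_ ET (by rw [hET, Set.Finite.coe_toFinset])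
    calc δ ≤ ENNReal.ofReal Δ := by rw [← hδδ]; exact le_self_add
      _ ≤ wdist T w u v := le_of_lt ((hsep u ((hmemN u).1 hu) v hv (Ne.symm hvu)).trans_le
          (wdist_anti w hle u v))
  have hhigh : ∀ e ∈ ET, ∑ u ∈ Nfin, fball T w δ u e ≤ ENNReal.ofReal (w e) := by
    intro e he
    induction e using Sym2.ind with
    | _ a b =>
      have hadj : T.Adj a b := by
        rw [hET, Set.Finite.mem_toFinset] at he
        exact he
      exact sum_fball_le w hδne Nfin hsepT hadj
  have hgw_eq : gweight w T = ∑ e ∈ ET, w e := by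
    rw [gweight, ← finsum_mem_coe_finset, Set.Finite.coe_toFinset]
  have main : (Nfin.card : ℝ≥0∞) * δ ≤ ENNReal.ofReal (gweight w T) := by
    calc (Nfin.card : ℝ≥0∞) * δ = ∑ _u ∈ Nfin, δ := by rw [Finset.sum_const, nsmul_eq_mul]
      _ ≤ ∑ u ∈ Nfin, ∑ e ∈ ET, fball T w δ u e := Finset.sum_le_sum hlow
      _ = ∑ e ∈ ET, ∑ u ∈ Nfin, fball T w δ u e := Finset.sum_comm
      _ ≤ ∑ e ∈ ET, ENNReal.ofReal (w e) := Finset.sum_le_sum hhigh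
      _ = ENNReal.ofReal (∑ e ∈ ET, w e) :=
          (ENNReal.ofReal_sum_of_nonneg (fun e he => (hw e (hgToT e he)).le)).symm
      _ = ENNReal.ofReal (gweight w T) := by rw [hgw_eq]
  have h2 : ENNReal.ofReal ((N.ncard : ℝ) * (Δ / 2)) ≤ ENNReal.ofReal (gweight w T) := by
    rw [ENNReal.ofReal_mul (by positivity), ENNReal.ofReal_natCast, hNcard]
    exact main
  have hgw0 : 0 ≤ gweight w T := by
    rw [hgw_eq]
    exact Finset.sum_nonneg fun e he => (hw e (hgToT e he)).le
  have h3 : (N.ncard : ℝ) * (Δ / 2) ≤ gweight w T :=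
    (ENNReal.ofReal_le_ofReal_iff hgw0).1 h2
  linarith

end SepMST


/-- If `N` is a `Δ`-separated set of at least two vertices in a connected weighted graph `G`,
then `|N|·Δ ≤ 2·w(MST(G))`. -/
theorem separated_set_vs_mst {V : Type} [Fintype V] (G : SimpleGraph V) (w : Sym2 V → ℝ)
    (hG : G.Connected) (hw : ∀ e ∈ G.edgeSet, 0 < w e)
    (Δ : ℝ) (hΔ : 0 < Δ) (N : Set V) (hN2 : 2 ≤ N.ncard)
    (hsep : ∀ u ∈ N, ∀ v ∈ N, u ≠ v → ENNReal.ofReal Δ < wdist G w u v) :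
    (N.ncard : ℝ) * Δ ≤ 2 * mstWeight w G := by
  
  obtain ⟨T₀, hT₀le, hT₀⟩ := SepMST.exists_spanning_tree G hG
  have hne : {x : ℝ | ∃ T : SimpleGraph V, IsSpanningTree G T ∧ x = gweight w T}.Nonempty :=
    ⟨gweight w T₀, ⟨T₀, ⟨hT₀le, hT₀⟩, rfl⟩⟩
  have hlb : ∀ x ∈ {x : ℝ | ∃ T : SimpleGraph V, IsSpanningTree G T ∧ x = gweight w T},
      (N.ncard : ℝ) * Δ / 2 ≤ x := by
    rintro x ⟨T, ⟨hTle, hT⟩, rfl⟩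
    have := SepMST.tree_bound w hw hTle hT hΔ hN2 hsep
    linarith
  have hInf := le_csInf hne hlb
  unfold mstWeight
  linarith [hInf]
end

section
/- There exists a constant C ≥ 1 such that the following holds. Let G = (V,E,w) be a connected weighted graph on n ≥ 2 vertices, let 0 < ε < 1/10, let m ≥ 0 be an integer with 2^m ≥ diam(G) (the maximum of d_G over pairs of vertices), and let V = N_{-1} ⊇ N_0 ⊇ ⋯ ⊇ N_m be sets such that each N_i (0 ≤ i ≤ m) is a 2^i-net of (V, d_G). Then there exists a subgraph H₀ of G with w(H₀) ≤ (C·(m+2)/ε)·w(MST(G)) such that for every vertex v ∈ V and every i with 0 ≤ i ≤ m, there exists x ∈ N_i with d_{H₀}(v,x) ≤ (1+2ε)·2^i. -/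
open scoped ENNReal

namespace FirstPhaseAux

set_option linter.unusedSectionVars false

variable {V : Type*} {G H : SimpleGraph V} {w : Sym2 V → ℝ} {u v x : V}

lemma wdist_le (p : G.Walk u v) : wdist G w u v ≤ walkCost w p := iInf_le _ p

@[simp] lemma walkCost_nil : walkCost w (SimpleGraph.Walk.nil : G.Walk u u) = 0 := by
  simp [walkCost]

lemma walkCost_cons (h : G.Adj u v) (p : G.Walk v x) :
    walkCost w (SimpleGraph.Walk.cons h p) = ENNReal.ofReal (w s(u, v)) + walkCost w p := by
  simp [walkCost]

lemma walkCost_append (p : G.Walk u v) (q : G.Walk v x) :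
    walkCost w (p.append q) = walkCost w p + walkCost w q := by
  simp [walkCost]

lemma walkCost_reverse (p : G.Walk u v) : walkCost w p.reverse = walkCost w p := by
  simp [walkCost, SimpleGraph.Walk.edges_reverse, List.sum_reverse]

lemma wdist_self : wdist G w u u = 0 :=
  le_antisymm (by simpa using wdist_le (w := w) (SimpleGraph.Walk.nil : G.Walk u u)) zero_le

lemma wdist_symm : wdist G w u v = wdist G w v u := by
  apply le_antisymm <;>
  · refine le_iInf fun p => ?_
    simpa [walkCost_reverse] using wdist_le (w := w) p.reverse

lemma wdist_triangle : wdist G w u x ≤ wdist G w u v + wdist G w v x := by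
  cases isEmpty_or_nonempty (G.Walk u v) with
  | inl h => simp [wdist, iInf_of_empty]
  | inr h =>
    cases isEmpty_or_nonempty (G.Walk v x) with
    | inl h2 => simp [wdist, iInf_of_empty]
    | inr h2 =>
      conv_rhs => rw [wdist, wdist]
      rw [ENNReal.iInf_add]
      refine le_iInf fun p => ?_
      rw [ENNReal.add_iInf]
      refine le_iInf fun q => ?_
      calc wdist G w u x ≤ walkCost w (p.append q) := wdist_le _
        _ = _ := walkCost_append p q

lemma walkCost_transfer (p : G.Walk u v) (hp : ∀ e ∈ p.edges, e ∈ H.edgeSet) :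
    walkCost w (p.transfer H hp) = walkCost w p := by
  simp [walkCost, SimpleGraph.Walk.edges_transfer]

lemma wdist_le_of_le (hle : G ≤ H) : wdist H w u v ≤ wdist G w u v := by
  refine le_iInf fun p => ?_
  have hp : ∀ e ∈ p.edges, e ∈ H.edgeSet :=
    fun e he => SimpleGraph.edgeSet_mono hle (p.edges_subset_edgeSet he)
  calc wdist H w u v ≤ walkCost w (p.transfer H hp) := wdist_le _
    _ = walkCost w p := walkCost_transfer p hp

lemma wdist_le_edge (h : G.Adj u v) : wdist G w u v ≤ ENNReal.ofReal (w s(u, v)) := by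
  calc wdist G w u v ≤ walkCost w (SimpleGraph.Walk.cons h SimpleGraph.Walk.nil) := wdist_le _
    _ = ENNReal.ofReal (w s(u, v)) := by simp [walkCost_cons]

/-- helper: sum over a list's `toFinset` is at most the list sum, in `ℝ≥0∞`. -/
lemma sum_toFinset_le_list_sum [DecidableEq α] (l : List α) (f : α → ℝ≥0∞) :
    ∑ e ∈ l.toFinset, f e ≤ (l.map f).sum := by
  induction l with
  | nil => simp
  | cons a l ih =>
    simp only [List.toFinset_cons, List.map_cons, List.sum_cons]
    have h1 : ∑ e ∈ insert a l.toFinset, f e ≤ f a + ∑ e ∈ l.toFinset, f e := by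
      by_cases ha : a ∈ l.toFinset
      · rw [Finset.insert_eq_self.2 ha]; exact le_add_self
      · rw [Finset.sum_insert ha]
    calc ∑ e ∈ insert a l.toFinset, f e ≤ f a + ∑ e ∈ l.toFinset, f e := h1
      _ ≤ f a + (l.map f).sum := by gcongr

lemma ennreal_sum_union_le {α : Type*} [DecidableEq α] (A B : Finset α) (f : α → ℝ≥0∞) :
    ∑ x ∈ A ∪ B, f x ≤ ∑ x ∈ A, f x + ∑ x ∈ B, f x := by
  classical
  have : A ∪ B = A ∪ (B \ A) := by simp
  rw [this, Finset.sum_union Finset.disjoint_sdiff]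
  exact add_le_add (le_refl _) (Finset.sum_le_sum_of_subset Finset.sdiff_subset)

lemma ennreal_sum_biUnion_le {ι α : Type*} [DecidableEq α] (s : Finset ι) (t : ι → Finset α)
    (f : α → ℝ≥0∞) : ∑ x ∈ s.biUnion t, f x ≤ ∑ i ∈ s, ∑ x ∈ t i, f x := by
  classical
  induction s using Finset.induction with
  | empty => simp
  | insert a s hni ih =>
    rw [Finset.biUnion_insert, Finset.sum_insert hni]
    calc ∑ x ∈ t a ∪ s.biUnion t, f x ≤ ∑ x ∈ t a, f x + ∑ x ∈ s.biUnion t, f x :=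
          ennreal_sum_union_le _ _ _
      _ ≤ _ := by gcongr


section Trees
variable {V : Type} [Fintype V]

lemma reachable_delete {G : SimpleGraph V} {a b : V}
    (hr : (G.deleteEdges {s(a, b)}).Reachable a b) {u v : V} (p : G.Walk u v) :
    (G.deleteEdges {s(a, b)}).Reachable u v := by
  induction p with
  | nil => exact SimpleGraph.Reachable.refl _
  | @cons x y z hadj q ih =>
    refine SimpleGraph.Reachable.trans ?_ ih
    by_cases he : s(x, y) = s(a, b)
    · rw [Sym2.eq_iff] at he
      rcases he with ⟨rfl, rfl⟩ | ⟨rfl, rfl⟩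
      · exact hr
      · exact hr.symm
    · exact SimpleGraph.Adj.reachable (by simp [hadj, he])

lemma exists_spanning_tree_aux : ∀ (n : ℕ) (G : SimpleGraph V),
    (Set.toFinite G.edgeSet).toFinset.card ≤ n → G.Connected →
    ∃ T, T ≤ G ∧ T.IsTree := by
  intro n
  induction n with
  | zero =>
    intro G hn hc
    refine ⟨G, le_refl _, hc, ?_⟩
    intro v c hcyc
    have h3 := hcyc.three_le_length
    have hne : c.edges ≠ [] := by
      intro h
      have h2 := c.length_edges
      rw [h] at h2
      simp at h2
      omega
    obtain ⟨e, he⟩ := List.exists_mem_of_ne_nil _ hne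
    have heG : e ∈ G.edgeSet := c.edges_subset_edgeSet he
    have h0 : (Set.toFinite G.edgeSet).toFinset.card = 0 := Nat.le_zero.mp hn
    rw [Finset.card_eq_zero] at h0
    have : e ∈ (Set.toFinite G.edgeSet).toFinset := by simpa using heG
    simp [h0] at this
  | succ n ih =>
    intro G hn hc
    by_cases hac : G.IsAcyclic
    · exact ⟨G, le_refl _, hc, hac⟩
    · rw [SimpleGraph.isAcyclic_iff_forall_edge_isBridge] at hac
      push_neg at hac
      obtain ⟨e, heG, hnb⟩ := hac
      induction e using Sym2.ind with
      | _ a b =>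
        have hadj : G.Adj a b := heG
        rw [SimpleGraph.isBridge_iff] at hnb
        push_neg at hnb
        have hr' : (G.deleteEdges {s(a, b)}).Reachable a b := hnb
        set G' := G.deleteEdges {s(a, b)} with hG'
        have hconn : G'.Connected := by
          rw [SimpleGraph.connected_iff] at hc ⊢
          refine ⟨fun u v => ?_, hc.2⟩
          obtain ⟨p⟩ := hc.1 u v
          exact reachable_delete hr' p
        have hcard : (Set.toFinite G'.edgeSet).toFinset.card ≤ n := by
          have hss : (Set.toFinite G'.edgeSet).toFinset ⊂ (Set.toFinite G.edgeSet).toFinset := by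
            rw [Set.Finite.toFinset_ssubset_toFinset]
            rw [hG', SimpleGraph.edgeSet_deleteEdges]
            exact ⟨Set.diff_subset, fun hsub => by
              have := hsub heG
              simp at this⟩
          have := Finset.card_lt_card hss
          omega
        obtain ⟨T, hT1, hT2⟩ := ih G' hcard hconn
        exact ⟨T, le_trans hT1 (SimpleGraph.deleteEdges_le _), hT2⟩

instance : Finite (SimpleGraph V) :=
  Finite.of_injective (fun G : SimpleGraph V => G.Adj) fun G G' h => SimpleGraph.ext h

/-- The minimum spanning tree weight is attained. -/
lemma exists_mst (G : SimpleGraph V) (hc : G.Connected) (w : Sym2 V → ℝ) :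
    ∃ T, IsSpanningTree G T ∧ gweight w T = mstWeight w G := by
  classical
  have hne : {x : ℝ | ∃ T : SimpleGraph V, IsSpanningTree G T ∧ x = gweight w T}.Nonempty := by
    obtain ⟨T, hT1, hT2⟩ := exists_spanning_tree_aux (Set.toFinite G.edgeSet).toFinset.card G
      le_rfl hc
    exact ⟨gweight w T, T, ⟨hT1, hT2⟩, rfl⟩
  have hfin : {x : ℝ | ∃ T : SimpleGraph V, IsSpanningTree G T ∧ x = gweight w T}.Finite := by
    have : {x : ℝ | ∃ T : SimpleGraph V, IsSpanningTree G T ∧ x = gweight w T} ⊆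
        (fun T : SimpleGraph V => gweight w T) '' Set.univ := by
      rintro x ⟨T, _, rfl⟩
      exact ⟨T, Set.mem_univ _, rfl⟩
    exact Set.Finite.subset (Set.Finite.image _ (Set.finite_univ)) this
  have := hne.csInf_mem hfin
  obtain ⟨T, hT, hx⟩ := this
  exact ⟨T, hT, hx.symm⟩

/-- Existence of a maximal `δ`-separated set (a net) for the metric `wdist T w`. -/
lemma exists_net (T : SimpleGraph V) (w : Sym2 V → ℝ) (δ : ℝ≥0∞) :
    ∃ R : Finset V,
      (∀ u ∈ R, ∀ v ∈ R, u ≠ v → δ < wdist T w u v) ∧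
      (∀ v : V, ∃ r ∈ R, wdist T w v r ≤ δ) := by
  classical
  set F : Set (Finset V) := {S | ∀ u ∈ S, ∀ v ∈ S, u ≠ v → δ < wdist T w u v} with hF
  have hFne : F.Nonempty := ⟨∅, by simp [hF]⟩
  obtain ⟨R, hRF, hRmax⟩ := Set.Finite.exists_maximalFor (fun S : Finset V => S.card) F
    (Set.toFinite F) hFne
  refine ⟨R, hRF, fun v => ?_⟩
  by_contra hv
  push_neg at hv
  have hvR : v ∉ R := fun hvR => by
    have := hv v hvR
    simp [wdist_self] at this
  have hins : insert v R ∈ F := by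
    intro a ha b hb hab
    rcases Finset.mem_insert.1 ha with ha' | ha' <;> rcases Finset.mem_insert.1 hb with hb' | hb'
    · exact absurd (ha'.trans hb'.symm) hab
    · subst ha'; exact hv b hb'
    · subst hb'; rw [wdist_symm]; exact hv a ha'
    · exact hRF a ha' b hb' hab
  have hcard := hRmax (j := insert v R) hins (by
    show R.card ≤ (insert v R).card
    rw [Finset.card_insert_of_notMem hvR]; omega)
  simp only [Finset.card_insert_of_notMem hvR] at hcard
  omega

end Trees


section Counting
variable {V : Type} [Fintype V]

lemma touch_lower (T : SimpleGraph V) (w : Sym2 V → ℝ) (D : ℝ≥0∞) (s : V) :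
    ∀ {u v : V} (p : T.Walk u v), ¬ wdist T w s v ≤ D →
      D ≤ wdist T w s u +
        (p.edges.map (fun e => Set.indicator {e' : Sym2 V | ∃ x ∈ e', wdist T w s x ≤ D}
          (fun e' => ENNReal.ofReal (w e')) e)).sum := by
  intro u v p
  induction p with
  | nil => intro hv; exact le_trans (le_of_not_ge hv) (by simp)
  | @cons a b c hadj q ih =>
    intro hv
    simp only [SimpleGraph.Walk.edges_cons, List.map_cons, List.sum_cons]
    by_cases ha : wdist T w s a ≤ D
    · have htouch : s(a, b) ∈ {e' : Sym2 V | ∃ x ∈ e', wdist T w s x ≤ D} :=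
        ⟨a, by simp, ha⟩
      rw [Set.indicator_of_mem htouch]
      have hb : wdist T w s b ≤ wdist T w s a + ENNReal.ofReal (w s(a, b)) := by
        refine le_trans (wdist_triangle (v := a)) ?_
        gcongr
        exact wdist_le_edge hadj
      refine le_trans (ih hv) ?_
      rw [← add_assoc]
      gcongr
    · exact le_trans (le_of_not_ge ha) le_self_add

lemma counting (T : SimpleGraph V) (hT : T.Connected) (w : Sym2 V → ℝ) (δ : ℝ) (hδ : 0 < δ)
    (R : Finset V)
    (hsep : ∀ u ∈ R, ∀ v ∈ R, u ≠ v → ENNReal.ofReal δ < wdist T w u v)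
    (h2 : 2 ≤ R.card) :
    (R.card : ℝ≥0∞) * ENNReal.ofReal (δ / 2) ≤
      2 * ∑ e ∈ (Set.toFinite T.edgeSet).toFinset, ENNReal.ofReal (w e) := by
  classical
  set D := ENNReal.ofReal (δ / 2) with hD
  set KT := (Set.toFinite T.edgeSet).toFinset with hKT
  have hDδ : D + D = ENNReal.ofReal δ := by
    rw [hD, ← ENNReal.ofReal_add (by linarith) (by linarith)]
    norm_num
  have hper : ∀ s ∈ R, D ≤ ∑ e ∈ KT,
      Set.indicator {e' : Sym2 V | ∃ x ∈ e', wdist T w s x ≤ D}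
        (fun e' => ENNReal.ofReal (w e')) e := by
    intro s hs
    obtain ⟨s', hs', hne⟩ := Finset.exists_mem_ne (show 1 < R.card by omega) s
    obtain ⟨p0⟩ := hT.preconnected s s'
    set p := p0.toPath with hp
    have hv : ¬ wdist T w s s' ≤ D := by
      have h1 := hsep s hs s' hs' (Ne.symm hne)
      have h12 : D ≤ ENNReal.ofReal δ := ENNReal.ofReal_le_ofReal (by linarith)
      exact not_le.2 (lt_of_le_of_lt h12 h1)
    have hlow := touch_lower T w D s (p : T.Walk s s') hv
    rw [wdist_self, zero_add] at hlow
    refine le_trans hlow ?_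
    have hnodup : (p : T.Walk s s').edges.Nodup := p.2.isTrail.edges_nodup
    rw [← List.sum_toFinset _ hnodup]
    refine Finset.sum_le_sum_of_subset fun e he => ?_
    rw [hKT, Set.Finite.mem_toFinset]
    exact (p : T.Walk s s').edges_subset_edgeSet (List.mem_toFinset.1 he)
  have hedge : ∀ e ∈ KT, (∑ s ∈ R,
      Set.indicator {e' : Sym2 V | ∃ x ∈ e', wdist T w s x ≤ D}
        (fun e' => ENNReal.ofReal (w e')) e) ≤ 2 * ENNReal.ofReal (w e) := by
    intro e he
    induction e using Sym2.ind with
    | _ a b =>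
      set P : V → Prop := fun s => s(a, b) ∈ {e' : Sym2 V | ∃ x ∈ e', wdist T w s x ≤ D} with hP
      have hone : ∀ x : V, (R.filter (fun s => wdist T w s x ≤ D)).card ≤ 1 := by
        intro x
        rw [Finset.card_le_one]
        intro s1 h1 s2 h2
        by_contra hne
        rw [Finset.mem_filter] at h1 h2
        have hlt := hsep s1 h1.1 s2 h2.1 hne
        have htri : wdist T w s1 s2 ≤ D + D := by
          refine le_trans (wdist_triangle (v := x)) ?_
          gcongr
          · exact h1.2
          · rw [wdist_symm]; exact h2.2
        rw [hDδ] at htri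
        exact absurd htri (not_le.2 hlt)
      have hcard : (R.filter P).card ≤ 2 := by
        have hsub : R.filter P ⊆
            R.filter (fun s => wdist T w s a ≤ D) ∪
              R.filter (fun s => wdist T w s b ≤ D) := by
          intro s hs
          rw [Finset.mem_filter] at hs
          obtain ⟨hsR, x, hx, hxd⟩ := hs
          rcases Sym2.mem_iff.1 hx with rfl | rfl
          · exact Finset.mem_union_left _ (Finset.mem_filter.2 ⟨hsR, hxd⟩)
          · exact Finset.mem_union_right _ (Finset.mem_filter.2 ⟨hsR, hxd⟩)
        calc (R.filter P).card ≤ _ := Finset.card_le_card hsub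
          _ ≤ _ + _ := Finset.card_union_le _ _
          _ ≤ 2 := by
            have := hone a
            have := hone b
            omega
      have hsum : (∑ s ∈ R,
          Set.indicator {e' : Sym2 V | ∃ x ∈ e', wdist T w s x ≤ D}
            (fun e' => ENNReal.ofReal (w e')) s(a, b)) =
          ∑ s ∈ R.filter P, ENNReal.ofReal (w s(a, b)) := by
        rw [Finset.sum_filter]
        refine Finset.sum_congr rfl fun s _ => ?_
        by_cases hmem : P s
        · rw [if_pos hmem]
          exact Set.indicator_of_mem hmem _
        · rw [if_neg hmem]
          exact Set.indicator_of_notMem hmem _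
      rw [hsum, Finset.sum_const, nsmul_eq_mul]
      calc ((R.filter P).card : ℝ≥0∞) * ENNReal.ofReal (w s(a, b))
          ≤ 2 * ENNReal.ofReal (w s(a, b)) := by
            gcongr
            exact_mod_cast hcard
        _ = _ := rfl
  calc (R.card : ℝ≥0∞) * D = ∑ _s ∈ R, D := by rw [Finset.sum_const, nsmul_eq_mul]
    _ ≤ ∑ s ∈ R, ∑ e ∈ KT,
        Set.indicator {e' : Sym2 V | ∃ x ∈ e', wdist T w s x ≤ D}
          (fun e' => ENNReal.ofReal (w e')) e := Finset.sum_le_sum hper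
    _ = ∑ e ∈ KT, ∑ s ∈ R,
        Set.indicator {e' : Sym2 V | ∃ x ∈ e', wdist T w s x ≤ D}
          (fun e' => ENNReal.ofReal (w e')) e := Finset.sum_comm
    _ ≤ ∑ e ∈ KT, 2 * ENNReal.ofReal (w e) := Finset.sum_le_sum hedge
    _ = 2 * ∑ e ∈ KT, ENNReal.ofReal (w e) := by rw [Finset.mul_sum]

end Counting


section Assembly
variable {V : Type} [Fintype V]

lemma gweight_eq_sum (w : Sym2 V → ℝ) (H : SimpleGraph V) :
    gweight w H = ∑ e ∈ (Set.toFinite H.edgeSet).toFinset, w e := by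
  rw [gweight, ← finsum_mem_coe_finset, Set.Finite.coe_toFinset]

lemma wdist_le_total (T : SimpleGraph V) (hT : T.Connected) (w : Sym2 V → ℝ) (u v : V) :
    wdist T w u v ≤ ∑ e ∈ (Set.toFinite T.edgeSet).toFinset, ENNReal.ofReal (w e) := by
  classical
  obtain ⟨p0⟩ := hT.preconnected u v
  set p := p0.toPath with hp
  have hnodup : (p : T.Walk u v).edges.Nodup := p.2.isTrail.edges_nodup
  calc wdist T w u v ≤ walkCost w (p : T.Walk u v) := wdist_le _
    _ = ∑ e ∈ (p : T.Walk u v).edges.toFinset, ENNReal.ofReal (w e) :=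
        (List.sum_toFinset _ hnodup).symm
    _ ≤ _ := by
        refine Finset.sum_le_sum_of_subset fun e he => ?_
        rw [Set.Finite.mem_toFinset]
        exact (p : T.Walk u v).edges_subset_edgeSet (List.mem_toFinset.1 he)

end Assembly

end FirstPhaseAux

open FirstPhaseAux

/-- First phase of the construction: there is a constant `C ≥ 1` such that, given a connected
weighted graph `G` on `n ≥ 2` vertices, `0 < ε < 1/10`, `m` with `2^m ≥ diam(G)`, and a nested
hierarchy of `2^i`-nets `V = N_{-1} ⊇ N_0 ⊇ ⋯ ⊇ N_m`, there exists a subgraph `H₀` of weight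
at most `(C·(m+2)/ε)·w(MST(G))` in which every vertex is within distance `(1+2ε)·2^i` of
some point of `N_i`, for every `0 ≤ i ≤ m`. -/
theorem first_phase_representatives :
    ∃ C : ℝ, 1 ≤ C ∧
      ∀ (V : Type) [Fintype V], ∀ (G : SimpleGraph V) (w : Sym2 V → ℝ) (ε : ℝ) (m : ℕ)
        (N : ℕ → Set V),
        G.Connected → (∀ e ∈ G.edgeSet, 0 < w e) → 2 ≤ Fintype.card V →
        0 < ε → ε < 1 / 10 →
        (∀ x y : V, wdist G w x y ≤ ENNReal.ofReal ((2 : ℝ) ^ m)) →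
        (∀ i, i < m → N (i + 1) ⊆ N i) →
        (∀ i, i ≤ m →
          (∀ u ∈ N i, ∀ v ∈ N i, u ≠ v → ENNReal.ofReal ((2 : ℝ) ^ i) < wdist G w u v) ∧
          (∀ x : V, ∃ y ∈ N i, wdist G w x y ≤ ENNReal.ofReal ((2 : ℝ) ^ i))) →
        ∃ H : SimpleGraph V, H ≤ G ∧
          gweight w H ≤ C * ((m : ℝ) + 2) / ε * mstWeight w G ∧
          (∀ v : V, ∀ i, i ≤ m →
            ∃ x ∈ N i, wdist H w v x ≤ ENNReal.ofReal ((1 + 2 * ε) * 2 ^ i)) := by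
  classical
  refine ⟨10, by norm_num, ?_⟩
  intro V _ G w ε m N hconn hwpos hcardV hε hε10 hdiam hnest hnets
  obtain ⟨T, ⟨hTG, hTtree⟩, hTw⟩ := exists_mst G hconn w
  set W := gweight w T with hW
  set c : Sym2 V → ℝ≥0∞ := fun e => ENNReal.ofReal (w e) with hc
  set KT := (Set.toFinite T.edgeSet).toFinset with hKT
  have hTconn : T.Connected := hTtree.isConnected
  have hwT : ∀ e ∈ T.edgeSet, 0 < w e := fun e he =>
    hwpos e (SimpleGraph.edgeSet_mono hTG he)
  have hWsum : ENNReal.ofReal W = ∑ e ∈ KT, c e := by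
    rw [hW, gweight_eq_sum]
    exact ENNReal.ofReal_sum_of_nonneg fun e he =>
      (hwT e (by rwa [Set.Finite.mem_toFinset] at he)).le
  have hWpos : 0 < W := by
    obtain ⟨u, v, huv⟩ := Fintype.exists_pair_of_one_lt_card (by omega) (α := V)
    obtain ⟨p0⟩ := hTconn.preconnected u v
    have hne : p0.edges ≠ [] := by
      intro h
      apply huv
      refine SimpleGraph.Walk.eq_of_length_eq_zero (p := p0) ?_
      have := p0.length_edges
      rw [h] at this
      simpa using this.symm
    obtain ⟨e, he⟩ := List.exists_mem_of_ne_nil _ hne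
    have heT : e ∈ KT := by
      rw [hKT, Set.Finite.mem_toFinset]
      exact p0.edges_subset_edgeSet he
    rw [hW, gweight_eq_sum]
    refine Finset.sum_pos' (fun e' he' => (hwT e' (by rwa [Set.Finite.mem_toFinset] at he')).le)
      ⟨e, heT, hwT e (by rwa [hKT, Set.Finite.mem_toFinset] at heT)⟩
  have hdiamW : ∀ u v : V, wdist G w u v ≤ ENNReal.ofReal W := by
    intro u v
    refine le_trans (wdist_le_of_le hTG) ?_
    rw [hWsum]
    exact wdist_le_total T hTconn w u v
  -- nets with respect to the tree metric
  have hRex : ∀ i : ℕ, ∃ R : Finset V,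
      (∀ u ∈ R, ∀ v ∈ R, u ≠ v → ENNReal.ofReal (ε * 2 ^ i) < wdist T w u v) ∧
      (∀ v : V, ∃ r ∈ R, wdist T w v r ≤ ENNReal.ofReal (ε * 2 ^ i)) :=
    fun i => exists_net T w _
  choose R hRsep hRcov using hRex
  -- approximate shortest walks to the nets
  have hpath : ∀ (i : ℕ) (r : V), ∃ y : V, (i ≤ m → y ∈ N i) ∧ ∃ p : G.Walk r y,
      walkCost w p ≤ ENNReal.ofReal ((1 + ε) * 2 ^ i) ∧
      walkCost w p ≤ ENNReal.ofReal (2 * W) := by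
    intro i r
    by_cases hi : i ≤ m
    · obtain ⟨y, hy, hyd⟩ := (hnets i hi).2 r
      have hγpos : 0 < min (ε * 2 ^ i) W := lt_min (by positivity) hWpos
      have hlt : wdist G w r y < wdist G w r y + ENNReal.ofReal (min (ε * 2 ^ i) W) := by
        refine ENNReal.lt_add_right ?_ ?_
        · exact ne_top_of_le_ne_top (by simp) hyd
        · simp only [ne_eq, ENNReal.ofReal_eq_zero, not_le]
          linarith
      obtain ⟨p, hp⟩ := iInf_lt_iff.1
        (show (⨅ q : G.Walk r y, walkCost w q) <
          wdist G w r y + ENNReal.ofReal (min (ε * 2 ^ i) W) from hlt)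
      refine ⟨y, fun _ => hy, p, ?_, ?_⟩
      · calc walkCost w p ≤ wdist G w r y + ENNReal.ofReal (min (ε * 2 ^ i) W) := hp.le
          _ ≤ ENNReal.ofReal ((2 : ℝ) ^ i) + ENNReal.ofReal (ε * 2 ^ i) :=
              add_le_add hyd (ENNReal.ofReal_le_ofReal (min_le_left _ _))
          _ = ENNReal.ofReal ((1 + ε) * 2 ^ i) := by
              rw [← ENNReal.ofReal_add (by positivity) (by positivity)]
              congr 1
              ring
      · calc walkCost w p ≤ wdist G w r y + ENNReal.ofReal (min (ε * 2 ^ i) W) := hp.le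
          _ ≤ ENNReal.ofReal W + ENNReal.ofReal W :=
              add_le_add (hdiamW r y) (ENNReal.ofReal_le_ofReal (min_le_right _ _))
          _ = ENNReal.ofReal (2 * W) := by
              rw [← ENNReal.ofReal_add hWpos.le hWpos.le]
              congr 1
              ring
    · refine ⟨r, fun him => absurd him hi, SimpleGraph.Walk.nil, ?_, ?_⟩ <;>
        simp [walkCost_nil]
  choose y hy P hP1 hP2 using hpath
  -- the edge set of the subgraph
  set S : Finset (Sym2 V) := KT ∪ (Finset.range (m + 1)).biUnion
    (fun i => (R i).biUnion (fun r => (P i r).edges.toFinset)) with hS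
  have hSG : ∀ e ∈ S, e ∈ G.edgeSet := by
    intro e he
    rcases Finset.mem_union.1 he with he | he
    · exact SimpleGraph.edgeSet_mono hTG (by rwa [hKT, Set.Finite.mem_toFinset] at he)
    · obtain ⟨i, _, he2⟩ := Finset.mem_biUnion.1 he
      obtain ⟨r, _, he3⟩ := Finset.mem_biUnion.1 he2
      exact (P i r).edges_subset_edgeSet (List.mem_toFinset.1 he3)
  set H : SimpleGraph V := SimpleGraph.fromEdgeSet ↑S with hH
  have hHG : H ≤ G := by
    rw [hH, ← SimpleGraph.fromEdgeSet_edgeSet (G := G)]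
    exact SimpleGraph.fromEdgeSet_mono fun e he => hSG e (Finset.mem_coe.1 he)
  have hedgeH : ∀ e ∈ S, ¬ e.IsDiag → e ∈ H.edgeSet := by
    intro e he hd
    rw [hH, SimpleGraph.edgeSet_fromEdgeSet]
    exact ⟨he, hd⟩
  have hTH : T ≤ H := by
    rw [hH, ← SimpleGraph.fromEdgeSet_edgeSet (G := T)]
    refine SimpleGraph.fromEdgeSet_mono fun e he => ?_
    refine Finset.mem_coe.2 (Finset.mem_union_left _ ?_)
    rwa [hKT, Set.Finite.mem_toFinset]
  refine ⟨H, hHG, ?_, ?_⟩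
  · -- weight bound
    have hofReal : ENNReal.ofReal (gweight w H) = ∑ e ∈ (Set.toFinite H.edgeSet).toFinset, c e := by
      rw [gweight_eq_sum]
      exact ENNReal.ofReal_sum_of_nonneg fun e he =>
        (hwpos e (SimpleGraph.edgeSet_mono hHG (by rwa [Set.Finite.mem_toFinset] at he))).le
    have hHsub : (Set.toFinite H.edgeSet).toFinset ⊆ S := by
      intro e he
      rw [Set.Finite.mem_toFinset] at he
      rw [hH, SimpleGraph.edgeSet_fromEdgeSet] at he
      exact Finset.mem_coe.1 he.1
    have hb2 : ∑ e ∈ S, c e ≤ ∑ e ∈ KT, c e +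
        ∑ i ∈ Finset.range (m + 1), ∑ r ∈ R i, walkCost w (P i r) := by
      refine le_trans (ennreal_sum_union_le _ _ _) ?_
      gcongr
      refine le_trans (ennreal_sum_biUnion_le _ _ _) ?_
      refine Finset.sum_le_sum fun i _ => ?_
      refine le_trans (ennreal_sum_biUnion_le _ _ _) ?_
      refine Finset.sum_le_sum fun r _ => ?_
      simpa [walkCost, hc] using sum_toFinset_le_list_sum (P i r).edges c
    have hlevel : ∀ i ∈ Finset.range (m + 1),
        ∑ r ∈ R i, walkCost w (P i r) ≤ ENNReal.ofReal (8 * W / ε) := by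
      intro i _
      by_cases hcase : 2 ≤ (R i).card
      · have hcnt := counting T hTconn w (ε * 2 ^ i) (by positivity) (R i) (hRsep i) hcase
        have hsum : ∑ r ∈ R i, walkCost w (P i r) ≤
            ((R i).card : ℝ≥0∞) * ENNReal.ofReal ((1 + ε) * 2 ^ i) := by
          calc ∑ r ∈ R i, walkCost w (P i r)
              ≤ ∑ _r ∈ R i, ENNReal.ofReal ((1 + ε) * 2 ^ i) :=
                Finset.sum_le_sum fun r _ => hP1 i r
            _ = _ := by rw [Finset.sum_const, nsmul_eq_mul]
        have hfac : ENNReal.ofReal ((1 + ε) * 2 ^ i) =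
            ENNReal.ofReal (ε * 2 ^ i / 2) * ENNReal.ofReal (2 * (1 + ε) / ε) := by
          rw [← ENNReal.ofReal_mul (by positivity)]
          congr 1
          field_simp
        calc ∑ r ∈ R i, walkCost w (P i r)
            ≤ ((R i).card : ℝ≥0∞) * ENNReal.ofReal ((1 + ε) * 2 ^ i) := hsum
          _ = (((R i).card : ℝ≥0∞) * ENNReal.ofReal (ε * 2 ^ i / 2)) *
              ENNReal.ofReal (2 * (1 + ε) / ε) := by rw [hfac, mul_assoc]
          _ ≤ (2 * ∑ e ∈ KT, c e) * ENNReal.ofReal (2 * (1 + ε) / ε) := by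
              gcongr
          _ = ENNReal.ofReal (2 * W) * ENNReal.ofReal (2 * (1 + ε) / ε) := by
              rw [← hWsum, ← ENNReal.ofReal_ofNat, ← ENNReal.ofReal_mul (by norm_num)]
          _ = ENNReal.ofReal (2 * W * (2 * (1 + ε) / ε)) := by
              rw [← ENNReal.ofReal_mul (by positivity)]
          _ ≤ ENNReal.ofReal (8 * W / ε) := by
              refine ENNReal.ofReal_le_ofReal ?_
              have h1 : 2 * W * (2 * (1 + ε) / ε) = (4 * W * (1 + ε)) / ε := by
                field_simp
                ring
              have h2 : (8 : ℝ) * W / ε = (8 * W) / ε := by ring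
              rw [h1, h2, div_le_div_iff_of_pos_right hε]
              nlinarith
      · have hsum : ∑ r ∈ R i, walkCost w (P i r) ≤
            ((R i).card : ℝ≥0∞) * ENNReal.ofReal (2 * W) := by
          calc ∑ r ∈ R i, walkCost w (P i r)
              ≤ ∑ _r ∈ R i, ENNReal.ofReal (2 * W) :=
                Finset.sum_le_sum fun r _ => hP2 i r
            _ = _ := by rw [Finset.sum_const, nsmul_eq_mul]
        have hle1 : ((R i).card : ℝ≥0∞) ≤ 1 := by
          exact_mod_cast (by omega : (R i).card ≤ 1)
        calc ∑ r ∈ R i, walkCost w (P i r)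
            ≤ ((R i).card : ℝ≥0∞) * ENNReal.ofReal (2 * W) := hsum
          _ ≤ 1 * ENNReal.ofReal (2 * W) := by gcongr
          _ = ENNReal.ofReal (2 * W) := one_mul _
          _ ≤ ENNReal.ofReal (8 * W / ε) := by
              refine ENNReal.ofReal_le_ofReal ?_
              rw [le_div_iff₀ hε]
              nlinarith
    have htot : ENNReal.ofReal (gweight w H) ≤
        ENNReal.ofReal (W + (m + 1) * (8 * W / ε)) := by
      calc ENNReal.ofReal (gweight w H)
          = ∑ e ∈ (Set.toFinite H.edgeSet).toFinset, c e := hofReal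
        _ ≤ ∑ e ∈ S, c e := Finset.sum_le_sum_of_subset hHsub
        _ ≤ ∑ e ∈ KT, c e +
            ∑ i ∈ Finset.range (m + 1), ∑ r ∈ R i, walkCost w (P i r) := hb2
        _ ≤ ENNReal.ofReal W +
            ∑ _i ∈ Finset.range (m + 1), ENNReal.ofReal (8 * W / ε) := by
            rw [hWsum]
            exact add_le_add (le_refl _) (Finset.sum_le_sum hlevel)
        _ = ENNReal.ofReal W + ((m : ℝ≥0∞) + 1) * ENNReal.ofReal (8 * W / ε) := by
            rw [Finset.sum_const, Finset.card_range, nsmul_eq_mul]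
            norm_num
        _ = ENNReal.ofReal (W + (m + 1) * (8 * W / ε)) := by
            have hcast : ((m : ℝ≥0∞) + 1) = ENNReal.ofReal ((m : ℝ) + 1) := by
              rw [ENNReal.ofReal_add (Nat.cast_nonneg m) zero_le_one,
                ENNReal.ofReal_natCast, ENNReal.ofReal_one]
            rw [hcast, ← ENNReal.ofReal_mul (by positivity),
              ← ENNReal.ofReal_add hWpos.le (by positivity)]
    have hreal : gweight w H ≤ W + (m + 1) * (8 * W / ε) :=
      (ENNReal.ofReal_le_ofReal_iff (by positivity)).1 htot
    have hbound : W + ((m : ℝ) + 1) * (8 * W / ε) ≤ 10 * ((m : ℝ) + 2) / ε * W := by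
      have h1 : W + ((m : ℝ) + 1) * (8 * W / ε) = (ε * W + 8 * ((m : ℝ) + 1) * W) / ε := by
        field_simp
      have h2 : 10 * ((m : ℝ) + 2) / ε * W = (10 * ((m : ℝ) + 2) * W) / ε := by ring
      rw [h1, h2, div_le_div_iff_of_pos_right hε]
      have hm : (0 : ℝ) ≤ (m : ℝ) := Nat.cast_nonneg m
      nlinarith
    calc gweight w H ≤ W + ((m : ℝ) + 1) * (8 * W / ε) := hreal
      _ ≤ 10 * ((m : ℝ) + 2) / ε * W := hbound
      _ = 10 * ((m : ℝ) + 2) / ε * mstWeight w G := by rw [← hTw]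
  · -- distance bound
    intro v i hi
    obtain ⟨r, hr, hvr⟩ := hRcov i v
    refine ⟨y i r, hy i r hi, ?_⟩
    have h1 : wdist H w v r ≤ ENNReal.ofReal (ε * 2 ^ i) :=
      le_trans (wdist_le_of_le hTH) hvr
    have hPH : ∀ e ∈ (P i r).edges, e ∈ H.edgeSet := by
      intro e he
      refine hedgeH e ?_ ?_
      · exact Finset.mem_union_right _ (Finset.mem_biUnion.2
          ⟨i, Finset.mem_range.2 (by omega), Finset.mem_biUnion.2
            ⟨r, hr, List.mem_toFinset.2 he⟩⟩)
      · exact SimpleGraph.not_isDiag_of_mem_edgeSet G ((P i r).edges_subset_edgeSet he)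
    have h2 : wdist H w r (y i r) ≤ ENNReal.ofReal ((1 + ε) * 2 ^ i) := by
      calc wdist H w r (y i r) ≤ walkCost w ((P i r).transfer H hPH) := wdist_le _
        _ = walkCost w (P i r) := walkCost_transfer _ _
        _ ≤ _ := hP1 i r
    calc wdist H w v (y i r) ≤ wdist H w v r + wdist H w r (y i r) :=
        wdist_triangle (v := r)
      _ ≤ ENNReal.ofReal (ε * 2 ^ i) + ENNReal.ofReal ((1 + ε) * 2 ^ i) := by gcongr
      _ = ENNReal.ofReal ((1 + 2 * ε) * 2 ^ i) := by
          rw [← ENNReal.ofReal_add (by positivity) (by positivity)]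
          congr 1
          ring
end

section
/- Let (X,d) be a metric space, let Δ > 0 be a real number, and let N ⊆ X be a finite set with |N| = m ≥ 2 such that d(u,v) > Δ for all distinct u, v ∈ N. Then for every finite sequence x_0, x_1, …, x_ℓ of points of X such that every point of N occurs among the x_i, one has ∑_{i=0}^{ℓ−1} d(x_i, x_{i+1}) ≥ (m−1)·Δ. -/
/-- Telescoping triangle inequality over an interval of indices. -/
lemma dist_le_sum_Ico {X : Type*} [MetricSpace X] (x : ℕ → X) {a b : ℕ} (hab : a ≤ b) :
    dist (x a) (x b) ≤ ∑ i ∈ Finset.Ico a b, dist (x i) (x (i + 1)) := by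
  have h := dist_le_range_sum_dist (fun k => x (a + k)) (b - a)
  rw [Finset.sum_Ico_eq_sum_range]
  have hb : a + (b - a) = b := Nat.add_sub_cancel' hab
  calc dist (x a) (x b) = dist (x (a + 0)) (x (a + (b - a))) := by rw [hb, Nat.add_zero]
    _ ≤ ∑ k ∈ Finset.range (b - a), dist (x (a + k)) (x (a + k + 1)) := h
    _ = ∑ k ∈ Finset.range (b - a), dist (x (a + k)) (x (a + (k + 1))) := by
        simp [Nat.add_assoc]

/-- Packing lemma: any tour `x_0, x_1, …, x_ℓ` visiting all points of a `Δ`-separated set of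
`m ≥ 2` points in a metric space has total length at least `(m-1)·Δ`. -/
theorem separated_tour_length {X : Type*} [MetricSpace X]
    (Δ : ℝ) (hΔ : 0 < Δ) (N : Set X) (hNfin : N.Finite)
    (m : ℕ) (hm : N.ncard = m) (hm2 : 2 ≤ m)
    (hsep : ∀ u ∈ N, ∀ v ∈ N, u ≠ v → Δ < dist u v)
    (ℓ : ℕ) (x : ℕ → X) (hcover : ∀ y ∈ N, ∃ i ≤ ℓ, x i = y) :
    ((m : ℝ) - 1) * Δ ≤ ∑ i ∈ Finset.range ℓ, dist (x i) (x (i + 1)) := by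
  classical
  -- the set of "first occurrence" indices
  set I : Finset ℕ :=
    (Finset.range (ℓ + 1)).filter (fun i => x i ∈ N ∧ ∀ j < i, x j ≠ x i) with hI
  have hImemN : ∀ i ∈ I, x i ∈ N := by
    intro i hi
    simp only [hI, Finset.mem_filter] at hi
    exact hi.2.1
  have hIle : ∀ i ∈ I, i ≤ ℓ := by
    intro i hi
    simp only [hI, Finset.mem_filter, Finset.mem_range] at hi
    omega
  have hinj : ∀ a ∈ I, ∀ b ∈ I, x a = x b → a = b := by
    intro a ha b hb hab
    simp only [hI, Finset.mem_filter] at ha hb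
    rcases lt_trichotomy a b with h | h | h
    · exact absurd hab (hb.2.2 a h)
    · exact h
    · exact absurd hab.symm (ha.2.2 b h)
  have hsurj : ∀ y ∈ N, ∃ i ∈ I, x i = y := by
    intro y hy
    obtain ⟨i, hiℓ, hix⟩ := hcover y hy
    have hex : ∃ j, x j = y := ⟨i, hix⟩
    refine ⟨Nat.find hex, ?_, Nat.find_spec hex⟩
    have hk : Nat.find hex ≤ i := Nat.find_le hix
    simp only [hI, Finset.mem_filter, Finset.mem_range]
    refine ⟨by omega, by rw [Nat.find_spec hex]; exact hy, ?_⟩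
    intro j hj
    rw [Nat.find_spec hex]
    exact Nat.find_min hex hj
  -- |I| = m
  have hcard : I.card = m := by
    have himg : I.image x = hNfin.toFinset := by
      apply Finset.ext
      intro y
      simp only [Finset.mem_image, Set.Finite.mem_toFinset]
      constructor
      · rintro ⟨i, hi, rfl⟩; exact hImemN i hi
      · intro hy; obtain ⟨i, hi, hxi⟩ := hsurj y hy; exact ⟨i, hi, hxi⟩
    have h1 : (I.image x).card = I.card := Finset.card_image_of_injOn hinj
    rw [himg] at h1
    rw [← h1, ← Set.ncard_eq_toFinset_card N hNfin, hm]
  -- order the indices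
  let e := I.orderIsoOfFin hcard
  let g : Fin m → ℕ := fun j => (e j : ℕ)
  have hgI : ∀ j, g j ∈ I := fun j => (e j).2
  have hgmono : StrictMono g := fun a b hab => by
    exact_mod_cast (Finset.orderIsoOfFin I hcard).strictMono hab
  -- main induction
  have key : ∀ j : ℕ, (h : j < m) →
      (j : ℝ) * Δ ≤ ∑ i ∈ Finset.range (g ⟨j, h⟩), dist (x i) (x (i + 1)) := by
    intro j
    induction j with
    | zero =>
      intro h
      simp only [Nat.cast_zero, zero_mul]
      exact Finset.sum_nonneg fun i _ => dist_nonneg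
    | succ j ih =>
      intro h
      have hj : j < m := by omega
      have hlt : g ⟨j, hj⟩ < g ⟨j + 1, h⟩ := hgmono (by simp [Fin.lt_def])
      set a := g ⟨j, hj⟩
      set b := g ⟨j + 1, h⟩
      have hsplit : ∑ i ∈ Finset.range b, dist (x i) (x (i + 1)) =
          (∑ i ∈ Finset.range a, dist (x i) (x (i + 1))) +
          ∑ i ∈ Finset.Ico a b, dist (x i) (x (i + 1)) := by
        rw [Finset.range_eq_Ico, Finset.range_eq_Ico]
        exact (Finset.sum_Ico_consecutive (fun i => dist (x i) (x (i + 1))) (Nat.zero_le a) hlt.le).symm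
      have hdist : Δ < dist (x a) (x b) := by
        apply hsep _ (hImemN _ (hgI _)) _ (hImemN _ (hgI _))
        intro hxab
        exact absurd (hinj _ (hgI _) _ (hgI _) hxab) hlt.ne
      have h2 : Δ ≤ ∑ i ∈ Finset.Ico a b, dist (x i) (x (i + 1)) :=
        le_trans hdist.le (dist_le_sum_Ico x hlt.le)
      push_cast
      rw [hsplit, add_mul, one_mul]
      exact add_le_add (ih hj) h2
  -- conclude
  have hm1 : m - 1 < m := by omega
  have hfinal := key (m - 1) hm1
  have hsub : Finset.range (g ⟨m - 1, hm1⟩) ⊆ Finset.range ℓ := by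
    apply Finset.range_subset_range.mpr
    exact hIle _ (hgI _)
  have hle : ∑ i ∈ Finset.range (g ⟨m - 1, hm1⟩), dist (x i) (x (i + 1)) ≤
      ∑ i ∈ Finset.range ℓ, dist (x i) (x (i + 1)) :=
    Finset.sum_le_sum_of_subset_of_nonneg hsub (fun i _ _ => dist_nonneg)
  have hcast : ((m - 1 : ℕ) : ℝ) = (m : ℝ) - 1 := by
    have : 1 ≤ m := by omega
    push_cast [Nat.cast_sub this]
    ring
  calc ((m : ℝ) - 1) * Δ = ((m - 1 : ℕ) : ℝ) * Δ := by rw [hcast]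
    _ ≤ _ := hfinal
    _ ≤ _ := hle
end
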